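/- Let R be a discrete valuation ring with uniformiser ϖ and fraction field K, and let M and L be R-lattices in K². Then there exist an R-basis (e₀, e₁) of M (indexed by Fin 2) and an antitone function f : Fin 2 → ℤ such that (ϖ^{f 0}·e₀, ϖ^{f 1}·e₁) is an R-basis of L. -/

import Mathlib

set_option linter.unusedSectionVars false
set_option maxHeartbeats 1000000


/-- An `R`-lattice in `K²`: an `R`-submodule of `K²` that is finitely generated over `R`
and spans `K²` as a `K`-vector space. -/
structure BTLattice (R : Type*) [CommRing R] (K : Type*) [Field K] [Algebra R K] where
  /-- the underlying submodule -/
  toSubmodule : Submodule R (Fin 2 → K)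
  fg : toSubmodule.FG
  spans : Submodule.span K (toSubmodule : Set (Fin 2 → K)) = ⊤

section helpers
variable {R : Type*} [CommRing R] [IsDomain R] {K : Type*} [Field K] [Algebra R K]
  [IsFractionRing R K]

lemma BTLattice.card_eq_two (M : BTLattice R K) {ι : Type*} [Fintype ι]
    (b : Module.Basis ι R M.toSubmodule) : Fintype.card ι = 2 := by
  set v : ι → (Fin 2 → K) := fun i => (b i : Fin 2 → K) with hv
  have hli : LinearIndependent R v := by
    have := b.linearIndependent.map' M.toSubmodule.subtype (Submodule.ker_subtype _)
    exact this
  have hliK : LinearIndependent K v := (LinearIndependent.iff_fractionRing R K).mp hli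
  have h1 : Submodule.span R (Set.range v) = M.toSubmodule := by
    have : Set.range v = M.toSubmodule.subtype '' Set.range b := by
      rw [← Set.range_comp]; rfl
    rw [this, ← Submodule.map_span, b.span_eq, Submodule.map_top, Submodule.range_subtype]
  have hsp : Submodule.span K (Set.range v) = ⊤ := by
    apply top_unique
    rw [← M.spans]
    apply Submodule.span_le.mpr
    intro x hx
    rw [← h1] at hx
    exact Submodule.span_subset_span R K _ hx
  let bK : Module.Basis ι K (Fin 2 → K) := Module.Basis.mk hliK (by rw [hsp])
  have := Module.finrank_eq_card_basis bK
  simp only [Module.finrank_pi, Fintype.card_fin] at this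
  omega

lemma BTLattice.exists_smul_mem (M : BTLattice R K) (x : Fin 2 → K) :
    ∃ r : R, r ≠ 0 ∧ algebraMap R K r • x ∈ M.toSubmodule := by
  have hx : x ∈ Submodule.span K (M.toSubmodule : Set (Fin 2 → K)) := by
    rw [M.spans]; trivial
  induction hx using Submodule.span_induction with
  | mem y hy => exact ⟨1, one_ne_zero, by simpa using hy⟩
  | zero => exact ⟨1, one_ne_zero, by simp⟩
  | add y z _ _ hy hz =>
    obtain ⟨r, hr, hry⟩ := hy
    obtain ⟨s, hs, hsz⟩ := hz
    refine ⟨r * s, mul_ne_zero hr hs, ?_⟩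
    rw [map_mul, smul_add]
    apply Submodule.add_mem
    · have : (algebraMap R K r * algebraMap R K s) • y = s • (algebraMap R K r • y) := by
        rw [mul_comm, mul_smul, algebraMap_smul]
      rw [this]
      exact Submodule.smul_mem _ _ hry
    · have : (algebraMap R K r * algebraMap R K s) • z = r • (algebraMap R K s • z) := by
        rw [mul_smul, algebraMap_smul]
      rw [this]
      exact Submodule.smul_mem _ _ hsz
  | smul c y _ hy =>
    obtain ⟨r, hr, hry⟩ := hy
    obtain ⟨a, b, hb, rfl⟩ := IsFractionRing.div_surjective (A := R) c
    have hb0 : b ≠ 0 := nonZeroDivisors.ne_zero hb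
    have hbK : algebraMap R K b ≠ 0 :=
      (map_ne_zero_iff _ (IsFractionRing.injective R K)).mpr hb0
    refine ⟨b * r, mul_ne_zero hb0 hr, ?_⟩
    have : algebraMap R K (b * r) • (algebraMap R K a / algebraMap R K b) • y
        = a • (algebraMap R K r • y) := by
      rw [← algebraMap_smul K a, smul_smul, smul_smul, map_mul]
      congr 1
      field_simp
    rw [this]
    exact Submodule.smul_mem _ _ hry

lemma BTLattice.exists_pow_smul_mem [IsDiscreteValuationRing R] {ϖ : R} (hϖ : Irreducible ϖ)
    (M L : BTLattice R K) :
    ∃ k : ℕ, ∀ x ∈ L.toSubmodule, (algebraMap R K ϖ) ^ k • x ∈ M.toSubmodule := by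
  obtain ⟨s, hs⟩ := L.fg
  -- for each generator, a power works
  have key : ∀ x : Fin 2 → K, ∃ k : ℕ, (algebraMap R K ϖ) ^ k • x ∈ M.toSubmodule := by
    intro x
    obtain ⟨r, hr, hrx⟩ := M.exists_smul_mem x
    obtain ⟨n, u, rfl⟩ := IsDiscreteValuationRing.eq_unit_mul_pow_irreducible hr hϖ
    refine ⟨n, ?_⟩
    have : (algebraMap R K ϖ) ^ n • x = u⁻¹ • (algebraMap R K (↑u * ϖ ^ n) • x) := by
      rw [Units.smul_def, ← algebraMap_smul K ((u⁻¹ : Rˣ) : R), smul_smul, ← map_mul,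
        ← mul_assoc, Units.inv_mul, one_mul, ← map_pow]
    rw [this]
    exact Submodule.smul_mem _ _ hrx
  choose g hg using key
  classical
  refine ⟨s.sup g, ?_⟩
  have hbig : ∀ x ∈ (s : Set (Fin 2 → K)), (algebraMap R K ϖ) ^ (s.sup g) • x ∈ M.toSubmodule := by
    intro x hx
    have hle : g x ≤ s.sup g := Finset.le_sup hx
    obtain ⟨d, hd⟩ := Nat.exists_eq_add_of_le hle
    rw [hd, pow_add, mul_comm, mul_smul, ← map_pow, algebraMap_smul]
    exact Submodule.smul_mem _ _ (hg x)
  intro x hx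
  rw [← hs] at hx
  refine Submodule.span_induction ?_ (by simp) ?_ ?_ hx
  · exact hbig
  · intro y z _ _ hy hz
    rw [smul_add]; exact Submodule.add_mem _ hy hz
  · intro r y _ hy
    rw [smul_comm]
    exact Submodule.smul_mem _ _ hy


lemma fin2_antitone {f : Fin 2 → ℤ} (h : f 1 ≤ f 0) : Antitone f := by
  intro i j hij
  fin_cases i <;> fin_cases j <;>
    first | exact le_rfl | exact h | exact absurd hij (by decide)

lemma BTLattice.basis_nonempty [IsDiscreteValuationRing R] (M : BTLattice R K) :
    Nonempty (Module.Basis (Fin 2) R M.toSubmodule) := by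
  haveI : Module.IsTorsionFree R K :=
    Module.isTorsionFree_iff_algebraMap_injective.mpr (IsFractionRing.injective R K)
  haveI : Module.Finite R M.toSubmodule := Module.Finite.iff_fg.mpr M.fg
  obtain ⟨n, b⟩ := Module.basisOfFiniteTypeTorsionFree' (R := R) (M := M.toSubmodule)
  have hn : n = 2 := by simpa using M.card_eq_two b
  subst hn
  exact ⟨b⟩

end helpers

/-- Let `R` be a discrete valuation ring with uniformiser `ϖ` and fraction
field `K`, and `M`, `L` two `R`-lattices in `K²`. Then there are an `R`-basis `(e₀, e₁)` of `M`
and an antitone `f : Fin 2 → ℤ` such that `(ϖ ^ f 0 • e₀, ϖ ^ f 1 • e₁)` is an `R`-basis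
of `L`. -/
theorem exists_normal_basis {R : Type*} [CommRing R] [IsDomain R] [IsDiscreteValuationRing R]
    {K : Type*} [Field K] [Algebra R K] [IsFractionRing R K]
    (ϖ : R) (hϖ : Irreducible ϖ) (M L : BTLattice R K) :
    ∃ (bM : Module.Basis (Fin 2) R M.toSubmodule) (bL : Module.Basis (Fin 2) R L.toSubmodule)
      (f : Fin 2 → ℤ), Antitone f ∧
      ∀ i, (bL i : Fin 2 → K) = (algebraMap R K ϖ) ^ (f i) • (bM i : Fin 2 → K) := by
  classical
  obtain ⟨bM0⟩ := M.basis_nonempty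
  obtain ⟨k, hk⟩ := BTLattice.exists_pow_smul_mem hϖ M L
  have hϖK : algebraMap R K ϖ ≠ 0 :=
    (map_ne_zero_iff _ (IsFractionRing.injective R K)).mpr hϖ.ne_zero
  set c : K := algebraMap R K ϖ ^ k with hc
  have hc0 : c ≠ 0 := pow_ne_zero _ hϖK
  let φ : (Fin 2 → K) →ₗ[R] (Fin 2 → K) :=
    ((LinearMap.lsmul K (Fin 2 → K)) c).restrictScalars R
  have hφ : ∀ x, φ x = c • x := fun x => rfl
  have hφinj : Function.Injective φ := fun x y hxy => by
    have : c • x = c • y := hxy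
    exact smul_right_injective _ hc0 this
  set L' := L.toSubmodule.map φ with hL'
  have hL'le : L' ≤ M.toSubmodule := by
    rintro _ ⟨x, hx, rfl⟩
    exact hk x hx
  set L'' := L'.comap M.toSubmodule.subtype with hL''
  obtain ⟨n, snf⟩ := L''.smithNormalForm bM0
  let e1 : L.toSubmodule ≃ₗ[R] L' := Submodule.equivMapOfInjective φ hφinj _
  let e2 : L'' ≃ₗ[R] L' := Submodule.comapSubtypeEquivOfLe hL'le
  let eL : L.toSubmodule ≃ₗ[R] L'' := e1.trans e2.symm
  have hn : n = 2 := by simpa using L.card_eq_two (snf.bN.map eL.symm)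
  subst hn
  let σ : Fin 2 ≃ Fin 2 :=
    Equiv.ofBijective snf.f (Finite.injective_iff_bijective.mp snf.f.injective)
  have ha : ∀ i, snf.a i ≠ 0 := by
    intro i h
    apply snf.bN.ne_zero i
    have h2 := snf.snf i
    rw [h, zero_smul] at h2
    exact Subtype.coe_injective h2
  choose m u hu using fun i => IsDiscreteValuationRing.eq_unit_mul_pow_irreducible (ha i) hϖ
  let bM1 : Module.Basis (Fin 2) R M.toSubmodule := snf.bM.unitsSMul (fun j => u (σ.symm j))
  let bL0 : Module.Basis (Fin 2) R L.toSubmodule := (snf.bN.map eL.symm).reindex σ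
  let g : Fin 2 → ℤ := fun j => (m (σ.symm j) : ℤ) - (k : ℤ)
  have key : ∀ j, (bL0 j : Fin 2 → K) = (algebraMap R K ϖ) ^ (g j) • (bM1 j : Fin 2 → K) := by
    intro j
    set i := σ.symm j with hi
    have hσi : snf.f i = j := σ.apply_symm_apply j
    have hbL0 : bL0 j = eL.symm (snf.bN i) := by
      simp [bL0, Module.Basis.reindex_apply, Module.Basis.map_apply, hi]
    -- main smul identity: c • bL0 j = algebraMap (a i) • bM (f i)
    have hmain : c • (bL0 j : Fin 2 → K) = (snf.a i : R) • (snf.bM (snf.f i) : Fin 2 → K) := by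
      rw [hbL0]
      have : eL.symm (snf.bN i) = e1.symm (e2 (snf.bN i)) := rfl
      rw [this]
      have h1 : φ ((e1.symm (e2 (snf.bN i)) : L.toSubmodule) : Fin 2 → K)
          = ((e2 (snf.bN i) : L') : Fin 2 → K) := by
        have := e1.apply_symm_apply (e2 (snf.bN i))
        calc φ ((e1.symm (e2 (snf.bN i)) : L.toSubmodule) : Fin 2 → K)
            = ((e1 (e1.symm (e2 (snf.bN i))) : L') : Fin 2 → K) := rfl
          _ = _ := by rw [this]
      have h2 : ((e2 (snf.bN i) : L') : Fin 2 → K)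
          = ((snf.bN i : M.toSubmodule) : Fin 2 → K) := rfl
      have h3 : ((snf.bN i : M.toSubmodule) : Fin 2 → K)
          = (snf.a i : R) • (snf.bM (snf.f i) : Fin 2 → K) := by
        rw [snf.snf i]
        rfl
      rw [← hφ, h1, h2, h3]
    have hbM1 : (bM1 j : Fin 2 → K) = ((u i : R)) • (snf.bM (snf.f i) : Fin 2 → K) := by
      simp [bM1, Module.Basis.unitsSMul_apply, hσi, ← hi, Units.smul_def]
    -- now convert to the zpow form
    have hum : (algebraMap R K (u i : R)) ≠ 0 :=
      (map_ne_zero_iff _ (IsFractionRing.injective R K)).mpr (Units.ne_zero (u i))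
    rw [hbM1]
    rw [← algebraMap_smul K ((u i : R)) (snf.bM (snf.f i) : Fin 2 → K), smul_smul]
    have hcancel : (bL0 j : Fin 2 → K) = c⁻¹ • ((snf.a i : R) • (snf.bM (snf.f i) : Fin 2 → K)) := by
      rw [← hmain, ← smul_assoc, smul_eq_mul, inv_mul_cancel₀ hc0, one_smul]
    rw [hcancel, ← algebraMap_smul K (snf.a i) (snf.bM (snf.f i) : Fin 2 → K), smul_smul]
    congr 1
    rw [hu i, map_mul, map_pow]
    have hg : g j = (m i : ℤ) - (k : ℤ) := rfl
    rw [hg, zpow_sub₀ hϖK, zpow_natCast, zpow_natCast, hc]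
    field_simp
  rcases le_total (g 1) (g 0) with h | h
  · exact ⟨bM1, bL0, g, fin2_antitone h, key⟩
  · let τ : Fin 2 ≃ Fin 2 := Equiv.swap 0 1
    have hτ : τ.symm = τ := Equiv.symm_swap 0 1
    refine ⟨bM1.reindex τ, bL0.reindex τ, g ∘ τ.symm, ?_, ?_⟩
    · apply fin2_antitone
      have h0 : τ.symm (0 : Fin 2) = 1 := by rw [hτ]; simp [τ]
      have h1 : τ.symm (1 : Fin 2) = 0 := by rw [hτ]; simp [τ]
      simp only [Function.comp_apply, h0, h1]
      exact h
    · intro j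
      simp only [Module.Basis.reindex_apply, Function.comp_apply]
      exact key (τ.symm j)
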